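/- Let H be a finite graph whose complement contains no complete bipartite subgraph K_{m,m} (between disjoint vertex sets of size m each). Let K be an induced subgraph of H, all of whose connected components have fewer than m vertices, and suppose K has at least m vertices. Then there exists a union L of some components of K such that m ≤ |L| < 2m and |V(K) ∖ L| < m. -/

import Mathlib

open SimpleGraph

/-- The complement of `H` contains no complete bipartite subgraph `K_{m,m}`. -/
def NoKmmInComplement {V : Type*} (H : SimpleGraph V) (m : ℕ) : Prop :=
  ¬ ∃ A B : Finset V, Disjoint A B ∧ A.card = m ∧ B.card = m ∧
      ∀ a ∈ A, ∀ b ∈ B, ¬ H.Adj a b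

theorem stmt7 {V : Type*} [Fintype V] (H : SimpleGraph V) (m : ℕ)
    (hH : NoKmmInComplement H m) (S : Set V)
    (hcomp : ∀ c : (H.induce S).ConnectedComponent, Nat.card c.supp < m)
    (hS : m ≤ S.ncard) :
    ∃ L : Set V, L ⊆ S ∧
      (∀ x y : S, (x : V) ∈ L → (H.induce S).Reachable x y → (y : V) ∈ L) ∧
      m ≤ L.ncard ∧ L.ncard < 2 * m ∧ (S \ L).ncard < m := by
  classical
  rcases Nat.eq_zero_or_pos m with hm0 | hm
  · exact absurd ⟨∅, ∅, by simp [hm0]⟩ hH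
  haveI : Fintype S := Fintype.ofFinite S
  set K := H.induce S with hK
  let gF : K.ConnectedComponent → Finset V := fun c => c.supp.toFinset.image Subtype.val
  have hmemg : ∀ (x : S) (c : K.ConnectedComponent), (x : V) ∈ gF c ↔ x ∈ c.supp := by
    intro x c
    simp only [gF, Finset.mem_image, Set.mem_toFinset]
    constructor
    · rintro ⟨x', hx', hxx⟩
      rwa [Subtype.ext hxx] at hx'
    · intro hx; exact ⟨x, hx, rfl⟩
  have hgcard : ∀ c, (gF c).card = Nat.card c.supp := by
    intro c
    rw [Finset.card_image_of_injective _ Subtype.val_injective, Set.toFinset_card,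
      Nat.card_eq_fintype_card]
  have hgpos : ∀ c, 0 < (gF c).card := by
    intro c
    obtain ⟨v, hv⟩ := c.exists_rep
    refine Finset.card_pos.mpr ⟨v.val, ?_⟩
    rw [hmemg, ConnectedComponent.mem_supp_iff]
    exact hv
  have hgsub : ∀ c, (gF c : Set V) ⊆ S := by
    intro c v hv
    simp only [gF, Finset.coe_image, Set.mem_image, Set.mem_toFinset] at hv
    obtain ⟨x, -, rfl⟩ := hv
    exact x.2
  have hgdisj : ∀ c d : K.ConnectedComponent, c ≠ d → Disjoint (gF c) (gF d) := by
    intro c d hcd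
    rw [Finset.disjoint_left]
    intro v hvc hvd
    have hvS : v ∈ S := hgsub c hvc
    rw [show v = ((⟨v, hvS⟩ : S) : V) from rfl, hmemg] at hvc hvd
    rw [ConnectedComponent.mem_supp_iff] at hvc hvd
    exact hcd (hvc ▸ hvd)
  let UF : Finset K.ConnectedComponent → Finset V := fun T => T.biUnion gF
  have hUcard : ∀ T, (UF T).card = ∑ c ∈ T, (gF c).card :=
    fun T => Finset.card_biUnion (fun x _ y _ h => hgdisj x y h)
  have hUsub : ∀ T, (UF T : Set V) ⊆ S := by
    intro T v hv
    simp only [UF, Finset.coe_biUnion, Set.mem_iUnion] at hv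
    obtain ⟨c, -, hc⟩ := hv
    exact hgsub c hc
  have hUniv : UF Finset.univ = S.toFinset := by
    ext v
    simp only [UF, Finset.mem_biUnion, Finset.mem_univ, true_and, Set.mem_toFinset]
    constructor
    · rintro ⟨c, hc⟩; exact hgsub c hc
    · intro hv
      exact ⟨K.connectedComponentMk ⟨v, hv⟩, (hmemg ⟨v, hv⟩ _).mpr rfl⟩
  have hP : ∃ n, ∃ T, (UF T).card = n ∧ m ≤ n := by
    refine ⟨_, Finset.univ, rfl, ?_⟩
    rw [hUniv, ← Set.ncard_eq_toFinset_card']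
    exact hS
  obtain ⟨T, hTcard, hTm⟩ := Nat.find_spec hP
  have hTne : T.Nonempty := by
    rw [Finset.nonempty_iff_ne_empty]
    rintro rfl
    simp only [UF, Finset.biUnion_empty, Finset.card_empty] at hTcard
    omega
  obtain ⟨c, hc⟩ := hTne
  have herase : (UF (T.erase c)).card + (gF c).card = (UF T).card := by
    rw [hUcard, hUcard, Finset.sum_erase_add T _ hc]
  have hsmall : (UF (T.erase c)).card < m := by
    by_contra h
    push_neg at h
    have hlt : (UF (T.erase c)).card < Nat.find hP := by
      have := hgpos c; omega
    exact Nat.find_min hP hlt ⟨T.erase c, rfl, h⟩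
  have hlt2m : (UF T).card < 2 * m := by
    have := hgcard c ▸ hcomp c
    omega
  have hclosed : ∀ x y : S, (x : V) ∈ (UF T : Set V) → K.Reachable x y →
      (y : V) ∈ (UF T : Set V) := by
    intro x y hx hr
    simp only [UF, Finset.coe_biUnion, Set.mem_iUnion] at hx ⊢
    obtain ⟨c', hc', hxc⟩ := hx
    rw [Finset.mem_coe, hmemg, ConnectedComponent.mem_supp_iff] at hxc
    refine ⟨c', hc', ?_⟩
    rw [Finset.mem_coe, hmemg, ConnectedComponent.mem_supp_iff, ← hxc]
    exact ConnectedComponent.sound hr.symm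
  refine ⟨(UF T : Set V), hUsub T, hclosed, ?_, ?_, ?_⟩
  · rw [Set.ncard_coe_finset]; omega
  · rw [Set.ncard_coe_finset]; exact hlt2m
  · by_contra h
    push_neg at h
    obtain ⟨A, hAsub, hAcard⟩ := Finset.exists_subset_card_eq (s := UF T) (n := m) (by omega)
    obtain ⟨B, hBsub, hBcard⟩ := Finset.exists_subset_card_eq (s :=
      (S \ (UF T : Set V)).toFinset) (n := m) (by rwa [← Set.ncard_eq_toFinset_card'])
    refine hH ⟨A, B, ?_, hAcard, hBcard, ?_⟩
    · rw [Finset.disjoint_left]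
      intro a haA haB
      have := hBsub haB
      rw [Set.mem_toFinset, Set.mem_diff] at this
      exact this.2 (hAsub haA)
    · intro a haA b hbB hab
      have hbS := hBsub hbB
      rw [Set.mem_toFinset, Set.mem_diff] at hbS
      have haL : a ∈ (UF T : Set V) := hAsub haA
      have haS : a ∈ S := hUsub T haL
      have hadj : K.Adj ⟨a, haS⟩ ⟨b, hbS.1⟩ := by
        simp only [hK, comap_adj, Function.Embedding.coe_subtype]
        exact hab
      exact hbS.2 (hclosed ⟨a, haS⟩ ⟨b, hbS.1⟩ haL hadj.reachable)
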